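/- Let G be a topological group and let ρ and ρ' be two left-invariant inner metrics on G, both compatible with the topology of G. Then for every ε > 0 there exist constants C, c > 0 such that for all x, y ∈ G with ρ(x,y) > ε one has c < ρ'(x,y)/ρ(x,y) < C. -/

import Mathlib

open Set Filter Topology Pointwise

/-- Key propagation lemma: if the `α`-ball of `ρ` is contained in the `β`-ball of `ρ'`,
then innerness of `ρ` propagates this to `(n+1)α`-balls vs `(n+1)β`-balls. -/
lemma statement11_aux
    {G : Type*} [Group G]
    (ρ ρ' : G → G → ℝ)
    (htri' : ∀ x y z, ρ' x z ≤ ρ' x y + ρ' y z)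
    (hinv' : ∀ g x y, ρ' (g * x) (g * y) = ρ' x y)
    (hinner : ∀ r s : ℝ, 0 < r → 0 < s →
      {x : G | ρ 1 x < r} * {x : G | ρ 1 x < s} = {x : G | ρ 1 x < r + s})
    (α β : ℝ) (hα : 0 < α) (hβ : 0 < β)
    (hsub : ∀ x : G, ρ 1 x < α → ρ' 1 x < β) :
    ∀ n : ℕ, ∀ x : G, ρ 1 x < (n + 1) * α → ρ' 1 x < (n + 1) * β := by
  intro n
  induction n with
  | zero => intro x hx; simpa using hsub x (by simpa using hx)
  | succ n ih =>
    intro x hx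
    push_cast at hx ⊢
    have hpos : (0 : ℝ) < (n + 1) * α := by positivity
    have hx' : x ∈ {x : G | ρ 1 x < (n + 1) * α} * {x : G | ρ 1 x < α} := by
      rw [hinner _ _ hpos hα]
      have h : ((n : ℝ) + 1) * α + α = (n + 1 + 1) * α := by ring
      simpa [h] using hx
    obtain ⟨y, hy, z, hz, rfl⟩ := hx'
    have h1 : ρ' 1 y < (n + 1) * β := ih y hy
    have h2 : ρ' y (y * z) < β := by
      have h := hinv' y 1 z
      rw [mul_one] at h
      rw [h]
      exact hsub z hz
    calc ρ' 1 (y * z) ≤ ρ' 1 y + ρ' y (y * z) := htri' 1 y (y * z)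
      _ < (n + 1) * β + β := add_lt_add h1 h2
      _ = ((n : ℝ) + 1 + 1) * β := by ring

/-- Linear comparison from the propagation lemma. -/
lemma statement11_aux2
    {G : Type*} [Group G]
    (ρ ρ' : G → G → ℝ)
    (htri' : ∀ x y z, ρ' x z ≤ ρ' x y + ρ' y z)
    (hinv' : ∀ g x y, ρ' (g * x) (g * y) = ρ' x y)
    (hinner : ∀ r s : ℝ, 0 < r → 0 < s →
      {x : G | ρ 1 x < r} * {x : G | ρ 1 x < s} = {x : G | ρ 1 x < r + s})
    (α β : ℝ) (hα : 0 < α) (hβ : 0 < β)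
    (hsub : ∀ x : G, ρ 1 x < α → ρ' 1 x < β) :
    ∀ x : G, 0 < ρ 1 x → ρ' 1 x < (ρ 1 x / α + 2) * β := by
  intro x hx
  set r := ρ 1 x with hr
  set n : ℕ := ⌈r / α⌉₊ with hn
  have hrα : (0:ℝ) ≤ r / α := by positivity
  have h1 : r ≤ (n : ℝ) * α := by
    rw [hn]
    have h := Nat.le_ceil (r / α)
    calc r = (r / α) * α := by field_simp
      _ ≤ (⌈r / α⌉₊ : ℝ) * α := mul_le_mul_of_nonneg_right h hα.le
  have h2 : (n : ℝ) < r / α + 1 := by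
    rw [hn]; exact Nat.ceil_lt_add_one hrα
  have hkey := statement11_aux ρ ρ' htri' hinv' hinner α β hα hβ hsub n x
    (lt_of_le_of_lt h1 (by nlinarith))
  calc ρ' 1 x < ((n : ℝ) + 1) * β := hkey
    _ ≤ (r / α + 2) * β := by nlinarith

theorem statement11
    {G : Type*} [Group G] [TopologicalSpace G] [IsTopologicalGroup G]
    (ρ ρ' : G → G → ℝ)
    (heq : ∀ x y, ρ x y = 0 ↔ x = y)
    (hsymm : ∀ x y, ρ x y = ρ y x)
    (htri : ∀ x y z, ρ x z ≤ ρ x y + ρ y z)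
    (hinv : ∀ g x y, ρ (g * x) (g * y) = ρ x y)
    (hcompat : ∀ x : G, (𝓝 x).HasBasis (fun ε : ℝ => 0 < ε) fun ε => {y | ρ x y < ε})
    (hinner : ∀ r s : ℝ, 0 < r → 0 < s →
      {x : G | ρ 1 x < r} * {x : G | ρ 1 x < s} = {x : G | ρ 1 x < r + s})
    (heq' : ∀ x y, ρ' x y = 0 ↔ x = y)
    (hsymm' : ∀ x y, ρ' x y = ρ' y x)
    (htri' : ∀ x y z, ρ' x z ≤ ρ' x y + ρ' y z)
    (hinv' : ∀ g x y, ρ' (g * x) (g * y) = ρ' x y)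
    (hcompat' : ∀ x : G, (𝓝 x).HasBasis (fun ε : ℝ => 0 < ε) fun ε => {y | ρ' x y < ε})
    (hinner' : ∀ r s : ℝ, 0 < r → 0 < s →
      {x : G | ρ' 1 x < r} * {x : G | ρ' 1 x < s} = {x : G | ρ' 1 x < r + s}) :
    ∀ ε : ℝ, 0 < ε → ∃ C c : ℝ, 0 < c ∧ 0 < C ∧
      ∀ x y : G, ε < ρ x y → c < ρ' x y / ρ x y ∧ ρ' x y / ρ x y < C := by
  intro ε hε
  -- get α : ρ-ball of radius α inside ρ'-ball of radius 1
  have hm1 : {y : G | ρ' 1 y < 1} ∈ 𝓝 (1 : G) :=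
    (hcompat' 1).mem_of_mem one_pos
  obtain ⟨α, hα, hαsub⟩ := (hcompat 1).mem_iff.mp hm1
  -- get α' : ρ'-ball of radius α' inside ρ-ball of radius ε/3
  have hm2 : {y : G | ρ 1 y < ε / 3} ∈ 𝓝 (1 : G) :=
    (hcompat 1).mem_of_mem (by linarith)
  obtain ⟨α', hα', hα'sub⟩ := (hcompat' 1).mem_iff.mp hm2
  refine ⟨1 / α + 2 / ε, α' / ε, by positivity, by positivity, ?_⟩
  intro x y hxy
  set z := x⁻¹ * y with hz
  have hρz : ρ 1 z = ρ x y := by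
    simpa [hz, inv_mul_cancel] using hinv x⁻¹ x y
  have hρ'z : ρ' 1 z = ρ' x y := by
    simpa [hz, inv_mul_cancel] using hinv' x⁻¹ x y
  have hrpos : 0 < ρ x y := lt_trans hε hxy
  have hne : x ≠ y := fun h => by
    rw [(heq x y).mpr h] at hrpos; exact lt_irrefl 0 hrpos
  have hnn : 0 ≤ ρ' x y := by
    have h := htri' x y x
    have h0 : ρ' x x = 0 := (heq' x x).mpr rfl
    have hs := hsymm' x y
    linarith
  have hρ'pos : 0 < ρ' x y :=
    lt_of_le_of_ne hnn (fun h => hne ((heq' x y).mp h.symm))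
  constructor
  · -- lower bound
    have hbound := statement11_aux2 ρ' ρ htri hinv hinner' α' (ε / 3) hα' (by linarith)
      (fun w hw => hα'sub hw) z (by rw [hρ'z]; exact hρ'pos)
    rw [hρz, hρ'z] at hbound
    rw [div_lt_div_iff₀ hε hrpos]
    have hdiv : ρ' x y / α' * α' = ρ' x y := div_mul_cancel₀ _ (ne_of_gt hα')
    nlinarith [mul_lt_mul_of_pos_right hbound hα', hdiv,
      mul_lt_mul_of_pos_right hxy hα']
  · -- upper bound
    have hbound := statement11_aux2 ρ ρ' htri' hinv' hinner α 1 hα one_pos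
      (fun w hw => hαsub hw) z (by rw [hρz]; exact hrpos)
    rw [hρz, hρ'z, mul_one] at hbound
    rw [div_lt_iff₀ hrpos]
    have h2 : 2 < 2 / ε * ρ x y := by
      rw [div_mul_eq_mul_div, lt_div_iff₀ hε]; nlinarith
    have h3 : (1 / α + 2 / ε) * ρ x y = ρ x y / α + 2 / ε * ρ x y := by ring
    rw [h3]
    linarith
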